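/- For every natural number f, (f!² / (2f)!) · (Σ_{k=0}^{f} C(f+1,k)²) = 4 − 2/(f+1) − f!²/(2f)!, where the identity is over the rational numbers. -/
import Mathlib

open Nat Finset

lemma sum_choose_sq (n : ℕ) :
    ∑ k ∈ Finset.range (n + 1), (n.choose k) ^ 2 = (2 * n).choose n := by
  have h := Nat.add_choose_eq n n n
  rw [two_mul, h, Nat.sum_antidiagonal_eq_sum_range_succ (fun i j => n.choose i * n.choose j)]
  refine Finset.sum_congr rfl fun k hk => ?_
  have hk' : k ≤ n := Nat.lt_succ_iff.mp (Finset.mem_range.mp hk)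
  rw [Nat.choose_symm hk', sq]

theorem stmt_4 (f : ℕ) :
    ((f ! : ℚ) ^ 2 / ((2 * f)! : ℚ))
        * (∑ k ∈ Finset.range (f + 1), ((f + 1).choose k : ℚ) ^ 2)
      = 4 - 2 / ((f : ℚ) + 1) - (f ! : ℚ) ^ 2 / ((2 * f)! : ℚ) := by
  have hnat : (∑ k ∈ Finset.range (f + 1), ((f+1).choose k) ^ 2) + 1
      = (2*(f+1)).choose (f+1) := by
    have := sum_choose_sq (f+1)
    rw [Finset.sum_range_succ, Nat.choose_self] at this
    simpa using this
  have hsum : (∑ k ∈ Finset.range (f + 1), ((f + 1).choose k : ℚ) ^ 2)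
      = ((2*(f+1)).choose (f+1) : ℚ) - 1 := by
    have := congrArg (Nat.cast : ℕ → ℚ) hnat
    push_cast at this
    linarith
  have hC : ((2*(f+1)).choose (f+1) : ℚ) * ((f+1)! : ℚ) * ((f+1)! : ℚ)
      = ((2*(f+1))! : ℚ) := by
    have h := Nat.choose_mul_factorial_mul_factorial (by omega : f+1 ≤ 2*(f+1))
    rw [show 2*(f+1)-(f+1) = f+1 from by omega] at h
    exact_mod_cast congrArg (Nat.cast : ℕ → ℚ) h
  have h1 : ((2*(f+1))! : ℚ) = (2*(f:ℚ)+2)*((2*(f:ℚ)+1)*((2*f)! : ℚ)) := by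
    rw [show 2*(f+1) = (2*f+1)+1 by ring, Nat.factorial_succ, Nat.factorial_succ]
    push_cast; ring
  have h2 : ((f+1)! : ℚ) = ((f:ℚ)+1) * (f ! : ℚ) := by
    rw [Nat.factorial_succ]; push_cast; ring
  rw [h1, h2] at hC
  have hf : (f ! : ℚ) ≠ 0 := Nat.cast_ne_zero.mpr (Nat.factorial_ne_zero f)
  have h2f : ((2*f)! : ℚ) ≠ 0 := Nat.cast_ne_zero.mpr (Nat.factorial_ne_zero _)
  have hf1 : (f : ℚ) + 1 ≠ 0 := by positivity
  rw [hsum]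
  field_simp
  nlinarith [hC, sq_nonneg ((f:ℚ)+1)]
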